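/- Assuming the continuum hypothesis, there exists an almost disjoint family 𝒜 on ω that is strongly ℵ₀-separated but whose Ψ-space Ψ(𝒜) is not almost-normal. -/

import Mathlib

open Set

/-- `A ⊆* D`: `A \ D` is finite. -/
def AlmostSubset (A D : Set ℕ) : Prop := (A \ D).Finite

/-- An almost disjoint family: a family of infinite subsets of `ℕ` any two distinct
members of which have finite intersection. -/
def AlmostDisjointFam (𝒜 : Set (Set ℕ)) : Prop :=
  (∀ A ∈ 𝒜, A.Infinite) ∧ ∀ A ∈ 𝒜, ∀ B ∈ 𝒜, A ≠ B → (A ∩ B).Finite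

/-- A maximal almost disjoint (MAD) family. -/
def MADFam (𝒜 : Set (Set ℕ)) : Prop :=
  AlmostDisjointFam 𝒜 ∧ ∀ X : Set ℕ, X.Infinite → ∃ A ∈ 𝒜, (A ∩ X).Infinite

/-- `D` is a partitioner for the family `𝒜`. -/
def IsPartitioner (𝒜 : Set (Set ℕ)) (D : Set ℕ) : Prop :=
  ∀ A ∈ 𝒜, AlmostSubset A D ∨ (A ∩ D).Finite

/-- The topology of the Ψ-space `Ψ(𝒜)` on the set `ℕ ⊕ ↥𝒜`: points of `ℕ` are isolated
and the sets `{A} ∪ (A \ F)`, `F` finite, form a neighbourhood base at `A ∈ 𝒜`. -/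
def psiTop (𝒜 : Set (Set ℕ)) : TopologicalSpace (ℕ ⊕ ↥𝒜) where
  IsOpen U := ∀ A : ↥𝒜, Sum.inr A ∈ U → ((A : Set ℕ) \ {n | Sum.inl n ∈ U}).Finite
  isOpen_univ := by intro A _; simp
  isOpen_inter := by
    intro U V hU hV A hA
    apply ((hU A hA.1).union (hV A hA.2)).subset
    rintro n ⟨hnA, hn⟩
    by_cases hU' : Sum.inl n ∈ U
    · exact Or.inr ⟨hnA, fun hV' => hn ⟨hU', hV'⟩⟩
    · exact Or.inl ⟨hnA, hU'⟩
  isOpen_sUnion := by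
    intro S hS A hA
    obtain ⟨U, hU, hAU⟩ := Set.mem_sUnion.mp hA
    apply (hS U hU A hAU).subset
    rintro n ⟨hnA, hn⟩
    exact ⟨hnA, fun h => hn (Set.mem_sUnion.mpr ⟨U, hU, h⟩)⟩

/-- A set is regular closed if it is the closure of its interior. -/
def IsRegClosed {X : Type*} [TopologicalSpace X] (K : Set X) : Prop :=
  closure (interior K) = K

/-- A set is π-closed if it is a finite intersection of regular closed sets. -/
def IsPiClosed {X : Type*} [TopologicalSpace X] (K : Set X) : Prop :=
  ∃ (n : ℕ) (f : Fin n → Set X), (∀ i, IsRegClosed (f i)) ∧ K = ⋂ i, f i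

/-- A space is almost-normal if any two disjoint closed sets, one of which is regular
closed, can be separated by disjoint open sets. -/
def AlmostNormalSp (X : Type*) [TopologicalSpace X] : Prop :=
  ∀ C K : Set X, IsClosed C → IsClosed K → IsRegClosed K → Disjoint C K →
    ∃ U V : Set X, IsOpen U ∧ IsOpen V ∧ C ⊆ U ∧ K ⊆ V ∧ Disjoint U V

/-- A space is partly-normal if any two disjoint closed sets, one regular closed and the
other π-closed, can be separated by disjoint open sets. -/
def PartlyNormalSp (X : Type*) [TopologicalSpace X] : Prop :=
  ∀ K₀ K₁ : Set X, IsRegClosed K₀ → IsPiClosed K₁ → Disjoint K₀ K₁ →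
    ∃ U V : Set X, IsOpen U ∧ IsOpen V ∧ K₀ ⊆ U ∧ K₁ ⊆ V ∧ Disjoint U V

/-- A space is quasi-normal if any two disjoint π-closed sets can be separated by
disjoint open sets. -/
def QuasiNormalSp (X : Type*) [TopologicalSpace X] : Prop :=
  ∀ K₀ K₁ : Set X, IsPiClosed K₀ → IsPiClosed K₁ → Disjoint K₀ K₁ →
    ∃ U V : Set X, IsOpen U ∧ IsOpen V ∧ K₀ ⊆ U ∧ K₁ ⊆ V ∧ Disjoint U V

/-- `D^0 = D` and `D^1 = ℕ \ D`. -/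
def boolPart (D : Set ℕ) : Bool → Set ℕ
  | false => D
  | true => Dᶜ

/-- Two sets are equal modulo a finite set. -/
def EqModFin (X Y : Set ℕ) : Prop := ((X \ Y) ∪ (Y \ X)).Finite

/-- A nice family of partitioners for `𝒜`. -/
def NiceFamily (𝒜 𝒟 : Set (Set ℕ)) : Prop :=
  (∀ D ∈ 𝒟, IsPartitioner 𝒜 D) ∧
  ∀ (n : ℕ) (Ds : Fin n → Set ℕ), (∀ i, Ds i ∈ 𝒟) → ∀ f : Fin n → Bool,
    {A | A ∈ 𝒜 ∧ AlmostSubset A (⋂ i, boolPart (Ds i) (f i))}.Finite →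
    EqModFin (⋂ i, boolPart (Ds i) (f i))
      (⋃₀ {A | A ∈ 𝒜 ∧ AlmostSubset A (⋂ i, boolPart (Ds i) (f i))})

/-- `𝒜` is strongly ℵ₀-separated. -/
def StronglyAleph0Separated (𝒜 : Set (Set ℕ)) : Prop :=
  ∀ ℬ 𝒞 : Set (Set ℕ), ℬ ⊆ 𝒜 → 𝒞 ⊆ 𝒜 → ℬ.Countable → 𝒞.Countable → Disjoint ℬ 𝒞 →
    ∃ D : Set ℕ, IsPartitioner 𝒜 D ∧ (∀ B ∈ ℬ, AlmostSubset B D) ∧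
      ∀ C ∈ 𝒞, (C ∩ D).Finite

/-- `𝒜` is weakly separated. -/
def WeaklySeparated (𝒜 : Set (Set ℕ)) : Prop :=
  ∀ ℬ 𝒞 : Set (Set ℕ), ℬ ⊆ 𝒜 → 𝒞 ⊆ 𝒜 → Disjoint ℬ 𝒞 →
    ∃ D : Set ℕ, D.Infinite ∧ (∀ B ∈ ℬ, (D ∩ B).Infinite) ∧ ∀ C ∈ 𝒞, (D ∩ C).Finite


/-- The even numbers, our set `E`. -/
def EE : Set ℕ := {m | m % 2 = 0}

/-- The base almost disjoint family: `BB n` is a canonical partition piece of `ℕ`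
meeting both evens and odds infinitely. -/
def BB (n : ℕ) : Set ℕ := {m | (Nat.unpair (m / 2)).1 = n}

def A0 : Set (Set ℕ) := Set.range BB

lemma mem_BB_even (n k : ℕ) : 2 * Nat.pair n k ∈ BB n := by
  simp [BB, Nat.mul_div_cancel_left _ (by norm_num : 0 < 2)]

lemma mem_BB_odd (n k : ℕ) : 2 * Nat.pair n k + 1 ∈ BB n := by
  have : (2 * Nat.pair n k + 1) / 2 = Nat.pair n k := by omega
  simp [BB, this]

lemma even_mem_EE (x : ℕ) : 2 * x ∈ EE := by simp [EE]

lemma odd_not_mem_EE (x : ℕ) : 2 * x + 1 ∉ EE := by simp [EE]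

lemma BB_even_infinite (n : ℕ) : ((BB n) ∩ EE).Infinite := by
  apply Set.infinite_of_injective_forall_mem
    (f := fun k : ℕ => 2 * Nat.pair n k)
  case hi =>
    intro a b hab
    simp only [] at hab
    have : Nat.pair n a = Nat.pair n b := by omega
    have := congrArg Nat.unpair this
    simpa using this
  case hf =>
    intro k
    exact ⟨mem_BB_even n k, even_mem_EE _⟩

lemma BB_odd_infinite (n : ℕ) : ((BB n) \ EE).Infinite := by
  apply Set.infinite_of_injective_forall_mem
    (f := fun k : ℕ => 2 * Nat.pair n k + 1)
  case hi =>
    intro a b hab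
    simp only [] at hab
    have : Nat.pair n a = Nat.pair n b := by omega
    have := congrArg Nat.unpair this
    simpa using this
  case hf =>
    intro k
    exact ⟨mem_BB_odd n k, odd_not_mem_EE _⟩

lemma BB_infinite (n : ℕ) : (BB n).Infinite :=
  (BB_even_infinite n).mono (inter_subset_left)

lemma BB_disjoint {n m : ℕ} (h : n ≠ m) : BB n ∩ BB m = ∅ := by
  ext x; simp only [BB, mem_inter_iff, mem_setOf_eq, mem_empty_iff_false, iff_false]
  rintro ⟨h1, h2⟩; exact h (h1 ▸ h2 ▸ rfl)

lemma BB_injective : Function.Injective BB := by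
  intro n m h
  by_contra hne
  have := BB_disjoint hne
  have h2 : 2 * Nat.pair n 0 ∈ BB n ∩ BB m := ⟨mem_BB_even n 0, h ▸ mem_BB_even n 0⟩
  rw [this] at h2; exact h2

/-- `S` is large w.r.t. `𝒢`: not almost covered by finitely many members. -/
def LargeP (𝒢 : Set (Set ℕ)) (S : Set ℕ) : Prop :=
  ∀ t : Finset (Set ℕ), ↑t ⊆ insert ∅ 𝒢 → (S \ ⋃₀ ↑t).Infinite
lemma LargeP.infinite {𝒢 : Set (Set ℕ)} {S : Set ℕ} (h : LargeP 𝒢 S) : S.Infinite := by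
  have := h ∅ (by simp)
  simpa using this

lemma LargeP.split {𝒢 : Set (Set ℕ)} {V D : Set ℕ} (h : LargeP 𝒢 V)
    (hno : ¬ LargeP 𝒢 (V ∩ D)) : LargeP 𝒢 (V \ D) := by
  classical
  simp only [LargeP, not_forall] at hno
  obtain ⟨t₁, ht₁, hfin⟩ := hno
  rw [Set.not_infinite] at hfin
  intro t ht
  have key := h (t ∪ t₁) (by push_cast; exact union_subset ht ht₁)
  intro hcon
  apply key
  apply (hfin.union hcon).subset
  intro x hx
  by_cases hxD : x ∈ D
  · exact Or.inl ⟨⟨hx.1, hxD⟩, fun hc => hx.2 (by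
      simp only [Finset.coe_union, sUnion_union] at *
      exact Or.inr hc)⟩
  · exact Or.inr ⟨⟨hx.1, hxD⟩, fun hc => hx.2 (by
      simp only [Finset.coe_union, sUnion_union] at *
      exact Or.inl hc)⟩

/-- The extension lemma: given a countable family `𝒢`, countably many "partitioner
commitments" `𝒟`, and a set `S` not almost covered by finitely many members of `𝒢`,
there is an infinite `A ⊆ S` almost disjoint from every member of `𝒢` which decides
every member of `𝒟`. -/
lemma exists_ext (𝒢 𝒟 : Set (Set ℕ)) (S : Set ℕ) (h𝒢 : 𝒢.Countable)
    (h𝒟 : 𝒟.Countable) (hS : LargeP 𝒢 S) :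
    ∃ A : Set ℕ, A ⊆ S ∧ A.Infinite ∧ (∀ G ∈ 𝒢, (A ∩ G).Finite) ∧
      ∀ D ∈ 𝒟, (A \ D).Finite ∨ (A ∩ D).Finite := by
  classical
  obtain ⟨g, hg⟩ := (h𝒢.insert ∅).exists_eq_range (insert_nonempty _ _)
  obtain ⟨d, hd⟩ := (h𝒟.insert ∅).exists_eq_range (insert_nonempty _ _)
  -- the decreasing sequence of large sets
  let V : ℕ → Set ℕ := fun k => Nat.rec S
    (fun m Vm => if LargeP 𝒢 (Vm ∩ d m) then Vm ∩ d m else Vm \ d m) k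
  have hV0 : V 0 = S := rfl
  have hVsucc : ∀ m, V (m + 1) =
      (if LargeP 𝒢 (V m ∩ d m) then V m ∩ d m else V m \ d m) := fun m => rfl
  have hVlarge : ∀ m, LargeP 𝒢 (V m) := by
    intro m
    induction m with
    | zero => exact hS
    | succ m ih =>
      rw [hVsucc m]
      split
      · assumption
      · exact ih.split (by assumption)
  have hVmono : ∀ m, V (m + 1) ⊆ V m := by
    intro m
    rw [hVsucc m]
    split
    · exact inter_subset_left
    · exact diff_subset
  have hVle : ∀ {m k}, m ≤ k → V k ⊆ V m := by
    intro m k h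
    induction h with
    | refl => exact subset_rfl
    | step h ih => exact (hVmono _).trans ih
  -- the sets from which we pick the diagonal
  let W : ℕ → Set ℕ := fun k => V k \ ⋃ i ∈ Finset.range k, g i
  have hW : ∀ k, (W k).Infinite := by
    intro k
    have ht : ↑((Finset.range k).image g) ⊆ insert ∅ 𝒢 := by
      intro x hx
      simp only [Finset.coe_image, mem_image] at hx
      obtain ⟨i, _, rfl⟩ := hx
      rw [hg]; exact mem_range_self i
    have := hVlarge k ((Finset.range k).image g) ht
    apply this.mono
    intro x hx
    refine ⟨hx.1, ?_⟩
    intro hc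
    apply hx.2
    simp only [Finset.coe_image, sUnion_image, mem_iUnion, exists_prop] at hc ⊢
    obtain ⟨i, hi, hxi⟩ := hc
    exact ⟨i, by simpa using hi, hxi⟩
  -- the diagonal sequence
  let a : ℕ → ℕ := fun k => Nat.rec (sInf (W 0))
    (fun k ak => sInf (W (k + 1) ∩ {m | ak < m})) k
  have ha0 : a 0 = sInf (W 0) := rfl
  have hasucc : ∀ k, a (k + 1) = sInf (W (k + 1) ∩ {m | a k < m}) := fun k => rfl
  have hamem : ∀ k, a k ∈ W k ∧ (∀ j, a (j + 1) > a j) → True := fun _ _ => trivial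
  have hmem : ∀ k, a k ∈ W k := by
    intro k
    cases k with
    | zero => exact Nat.sInf_mem (hW 0).nonempty
    | succ k =>
      rw [hasucc k]
      have : (W (k + 1) ∩ {m | a k < m}).Nonempty := by
        obtain ⟨x, hx, hlt⟩ := (hW (k + 1)).exists_gt (a k)
        exact ⟨x, hx, hlt⟩
      exact (Nat.sInf_mem this).1
  have hgt : ∀ k, a k < a (k + 1) := by
    intro k
    rw [hasucc k]
    have : (W (k + 1) ∩ {m | a k < m}).Nonempty := by
      obtain ⟨x, hx, hlt⟩ := (hW (k + 1)).exists_gt (a k)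
      exact ⟨x, hx, hlt⟩
    exact (Nat.sInf_mem this).2
  have hsm : StrictMono a := strictMono_nat_of_lt_succ hgt
  refine ⟨range a, ?_, ?_, ?_, ?_⟩
  · rintro x ⟨k, rfl⟩
    exact hV0 ▸ (hVle (Nat.zero_le k) (hmem k).1)
  · exact infinite_range_of_injective hsm.injective
  · -- almost disjoint from each G ∈ 𝒢
    intro G hG
    have : G ∈ range g := by rw [← hg]; exact mem_insert_of_mem _ hG
    obtain ⟨i, rfl⟩ := this
    have : range a ∩ g i ⊆ a '' {k | k ≤ i} := by
      rintro x ⟨⟨k, rfl⟩, hxg⟩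
      refine ⟨k, ?_, rfl⟩
      by_contra hk
      simp only [mem_setOf_eq, not_le] at hk
      have := (hmem k).2
      apply this
      simp only [mem_iUnion, exists_prop]
      exact ⟨i, Finset.mem_range.mpr hk, hxg⟩
    exact (((finite_Iic i).image a).subset this)
  · -- decides each D ∈ 𝒟
    intro D hD
    have : D ∈ range d := by rw [← hd]; exact mem_insert_of_mem _ hD
    obtain ⟨m, rfl⟩ := this
    have htail : ∀ k, m + 1 ≤ k → a k ∈ V (m + 1) := fun k hk => hVle hk (hmem k).1
    by_cases hL : LargeP 𝒢 (V m ∩ d m)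
    · left
      have hsub : V (m + 1) ⊆ d m := by rw [hVsucc m, if_pos hL]; exact inter_subset_right
      have : range a \ d m ⊆ a '' {k | k ≤ m} := by
        rintro x ⟨⟨k, rfl⟩, hxd⟩
        refine ⟨k, ?_, rfl⟩
        by_contra hk
        simp only [mem_setOf_eq, not_le] at hk
        exact hxd (hsub (htail k hk))
      exact ((finite_Iic m).image a).subset this
    · right
      have hsub : V (m + 1) ⊆ (d m)ᶜ := by
        rw [hVsucc m, if_neg hL]; exact fun x hx => hx.2
      have : range a ∩ d m ⊆ a '' {k | k ≤ m} := by
        rintro x ⟨⟨k, rfl⟩, hxd⟩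
        refine ⟨k, ?_, rfl⟩
        by_contra hk
        simp only [mem_setOf_eq, not_le] at hk
        exact (hsub (htail k hk)) hxd
      exact ((finite_Iic m).image a).subset this
/-- Construction of a partitioner: given a countable AD family `𝒢` and a subfamily `ℬ`,
there is a `D` almost containing every member of `ℬ` and almost avoiding every other
member of `𝒢`. -/
lemma exists_part (𝒢 ℬ : Set (Set ℕ)) (h𝒢 : 𝒢.Countable) (hB : ℬ ⊆ 𝒢)
    (had : ∀ A ∈ 𝒢, ∀ B ∈ 𝒢, A ≠ B → (A ∩ B).Finite) :
    ∃ D : Set ℕ, (∀ B ∈ ℬ, (B \ D).Finite) ∧ ∀ A ∈ 𝒢, A ∉ ℬ → (A ∩ D).Finite := by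
  classical
  obtain ⟨b, hb⟩ := ((h𝒢.mono hB).insert ∅).exists_eq_range (insert_nonempty _ _)
  obtain ⟨c, hc⟩ := ((h𝒢.mono (diff_subset (t := ℬ))).insert ∅).exists_eq_range
    (insert_nonempty _ _)
  have hbmem : ∀ k, b k = ∅ ∨ b k ∈ ℬ := by
    intro k
    have : b k ∈ insert ∅ ℬ := by rw [hb]; exact mem_range_self k
    simpa using this
  have hcmem : ∀ k, c k = ∅ ∨ (c k ∈ 𝒢 ∧ c k ∉ ℬ) := by
    intro k
    have : c k ∈ insert ∅ (𝒢 \ ℬ) := by rw [hc]; exact mem_range_self k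
    simpa [mem_diff] using this
  refine ⟨⋃ k, (b k \ ⋃ j ∈ Finset.range (k + 1), c j), ?_, ?_⟩
  · intro B hBB
    have : B ∈ range b := by rw [← hb]; exact mem_insert_of_mem _ hBB
    obtain ⟨k, rfl⟩ := this
    have hsub : b k \ (⋃ K, (b K \ ⋃ j ∈ Finset.range (K + 1), c j)) ⊆
        ⋃ j ∈ Finset.range (k + 1), (b k ∩ c j) := by
      intro x hx
      have : x ∉ b k \ ⋃ j ∈ Finset.range (k + 1), c j :=
        fun hcon => hx.2 (mem_iUnion.mpr ⟨k, hcon⟩)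
      simp only [mem_diff, hx.1, true_and, not_not] at this
      simp only [mem_iUnion, exists_prop] at this ⊢
      obtain ⟨j, hj, hxj⟩ := this
      exact ⟨j, hj, hx.1, hxj⟩
    apply (Set.Finite.biUnion (Finset.range (k + 1)).finite_toSet
      (fun j _ => ?_)).subset hsub
    rcases hcmem j with h | ⟨hj𝒢, hjB⟩
    · simp [h]
    · rcases hbmem k with h | hkB
      · simp [h]
      · exact had _ (hB hkB) _ hj𝒢 (fun he => hjB (he ▸ hkB))
  · intro A hA𝒢 hAB
    have : A ∈ range c := by
      rw [← hc]; exact mem_insert_of_mem _ ⟨hA𝒢, hAB⟩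
    obtain ⟨m, rfl⟩ := this
    have hsub : c m ∩ (⋃ k, (b k \ ⋃ j ∈ Finset.range (k + 1), c j)) ⊆
        ⋃ k ∈ Finset.range m, (c m ∩ b k) := by
      rintro x ⟨hxc, hxU⟩
      simp only [mem_iUnion, exists_prop] at hxU ⊢
      obtain ⟨k, hk⟩ := hxU
      refine ⟨k, ?_, hxc, hk.1⟩
      rw [Finset.mem_range]
      by_contra hkm
      push_neg at hkm
      apply hk.2
      simp only [mem_iUnion, exists_prop]
      exact ⟨m, Finset.mem_range.mpr (by omega), hxc⟩
    apply (Set.Finite.biUnion (Finset.range m).finite_toSet (fun k _ => ?_)).subset hsub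
    rcases hbmem k with h | hkB
    · simp [h]
    · exact had _ hA𝒢 _ (hB hkB) (fun he => hAB (he ▸ hkB))
/-- Index type for the recursion: a "threat" `D ⊆ ℕ` together with an enumerated
countable separation task. -/
abbrev XX : Type := Set ℕ × (ℕ → Set ℕ)

section Rec

variable (r : XX → XX → Prop)

open Classical in
/-- One step of the recursion: given the previously constructed members (killers) and
committed partitioners, construct the partitioner for the current task and the killer
for the current threat. -/
noncomputable def stageBody (x : XX) (prior : ∀ y, r y x → Option (Set ℕ) × Set ℕ) :
    Option (Set ℕ) × Set ℕ :=
  let fam : Set (Set ℕ) := A0 ∪ {A | ∃ y, ∃ h : r y x, (prior y h).1 = some A}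
  let coms : Set (Set ℕ) := {Dm | ∃ y, ∃ h : r y x, (prior y h).2 = Dm}
  let DP : Set ℕ :=
    if h : fam.Countable ∧ Set.range x.2 ⊆ fam ∧
        (∀ A ∈ fam, ∀ B ∈ fam, A ≠ B → (A ∩ B).Finite) then
      Classical.choose (exists_part fam (Set.range x.2) h.1 h.2.1 h.2.2)
    else ∅
  let KL : Option (Set ℕ) :=
    if h : fam.Countable ∧ (insert DP coms).Countable ∧ LargeP fam (EEᶜ \ x.1) then
      some (Classical.choose (exists_ext fam (insert DP coms) (EEᶜ \ x.1) h.1 h.2.1 h.2.2))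
    else none
  (KL, DP)

variable (hwf : WellFounded r)

noncomputable def stage : XX → Option (Set ℕ) × Set ℕ :=
  hwf.fix (stageBody r)

lemma stage_eq (x : XX) :
    stage r hwf x = stageBody r x (fun y _ => stage r hwf y) :=
  hwf.fix_eq _ x

/-- The family visible at stage `x`. -/
def famS (x : XX) : Set (Set ℕ) :=
  A0 ∪ {A | ∃ y, ∃ _h : r y x, (stage r hwf y).1 = some A}

/-- The partitioners committed before stage `x`. -/
def comsS (x : XX) : Set (Set ℕ) :=
  {Dm | ∃ y, ∃ _h : r y x, (stage r hwf y).2 = Dm}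

lemma famS_countable (hseg : ∀ x : XX, {y | r y x}.Countable) (x : XX) : (famS r hwf x).Countable := by
  apply Countable.union (countable_range BB)
  haveI := (hseg x).to_subtype
  apply (countable_range
    (fun p : {y | r y x} => ((stage r hwf p.1).1).getD ∅)).mono
  rintro A ⟨y, hy, hA⟩
  exact ⟨⟨y, hy⟩, by simp [hA]⟩

lemma comsS_countable (hseg : ∀ x : XX, {y | r y x}.Countable) (x : XX) : (comsS r hwf x).Countable := by
  haveI := (hseg x).to_subtype
  apply (countable_range (fun p : {y | r y x} => (stage r hwf p.1).2)).mono
  rintro A ⟨y, hy, hA⟩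
  exact ⟨⟨y, hy⟩, hA⟩

/-- Specification of the committed partitioner at stage `x`. -/
lemma stage_snd_spec (hseg : ∀ x : XX, {y | r y x}.Countable) (x : XX)
    (h1 : Set.range x.2 ⊆ famS r hwf x)
    (h2 : ∀ A ∈ famS r hwf x, ∀ B ∈ famS r hwf x, A ≠ B → (A ∩ B).Finite) :
    (∀ B ∈ Set.range x.2, (B \ (stage r hwf x).2).Finite) ∧
      ∀ A ∈ famS r hwf x, A ∉ Set.range x.2 → (A ∩ (stage r hwf x).2).Finite := by
  have hc := famS_countable r hwf hseg x
  rw [stage_eq]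
  show (∀ B ∈ Set.range x.2, (B \ (stageBody r x fun y _ => stage r hwf y).2).Finite) ∧ _
  unfold stageBody
  dsimp only
  split
  next h =>
    exact Classical.choose_spec (exists_part _ (Set.range x.2) h.1 h.2.1 h.2.2)
  next h =>
    exact absurd ⟨hc, h1, h2⟩ h
open Classical in
/-- The committed partitioner of stage `x`, as a standalone definition. -/
noncomputable def DPdef (x : XX) : Set ℕ :=
  if h : (famS r hwf x).Countable ∧ Set.range x.2 ⊆ famS r hwf x ∧
      (∀ A ∈ famS r hwf x, ∀ B ∈ famS r hwf x, A ≠ B → (A ∩ B).Finite) then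
    Classical.choose (exists_part (famS r hwf x) (Set.range x.2) h.1 h.2.1 h.2.2)
  else ∅

open Classical in
/-- The killer of stage `x`, as a standalone definition. -/
noncomputable def KLdef (x : XX) : Option (Set ℕ) :=
  if h : (famS r hwf x).Countable ∧
      (insert (DPdef r hwf x) (comsS r hwf x)).Countable ∧
      LargeP (famS r hwf x) (EEᶜ \ x.1) then
    some (Classical.choose (exists_ext (famS r hwf x)
      (insert (DPdef r hwf x) (comsS r hwf x)) (EEᶜ \ x.1) h.1 h.2.1 h.2.2))
  else none

lemma stage_pair (x : XX) :
    stage r hwf x = (KLdef r hwf x, DPdef r hwf x) := by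
  rw [stage_eq]
  rfl

/-- Specification of the killer added at stage `x`. -/
lemma stage_fst_spec (hseg : ∀ x : XX, {y | r y x}.Countable) (x : XX) (A : Set ℕ)
    (hA : (stage r hwf x).1 = some A) :
    A ⊆ EEᶜ \ x.1 ∧ A.Infinite ∧ (∀ G ∈ famS r hwf x, (A ∩ G).Finite) ∧
      ∀ D ∈ insert ((stage r hwf x).2) (comsS r hwf x), (A \ D).Finite ∨ (A ∩ D).Finite := by
  rw [stage_pair] at hA ⊢
  dsimp only at hA ⊢
  unfold KLdef at hA
  by_cases h : (famS r hwf x).Countable ∧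
      (insert (DPdef r hwf x) (comsS r hwf x)).Countable ∧
      LargeP (famS r hwf x) (EEᶜ \ x.1)
  · rw [dif_pos h] at hA
    have hAeq := Option.some_injective _ hA
    have := Classical.choose_spec (exists_ext (famS r hwf x)
      (insert (DPdef r hwf x) (comsS r hwf x)) (EEᶜ \ x.1) h.1 h.2.1 h.2.2)
    rw [hAeq] at this
    exact this
  · rw [dif_neg h] at hA
    exact absurd hA (by simp)

/-- If no killer is added at stage `x`, the relevant set was not large. -/
lemma stage_none_spec (hseg : ∀ x : XX, {y | r y x}.Countable) (x : XX)
    (hA : (stage r hwf x).1 = none) :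
    ¬ LargeP (famS r hwf x) (EEᶜ \ x.1) := by
  have hc := famS_countable r hwf hseg x
  have hc2 := comsS_countable r hwf hseg x
  rw [stage_pair] at hA
  dsimp only at hA
  unfold KLdef at hA
  intro hL
  rw [dif_pos ⟨hc, hc2.insert _, hL⟩] at hA
  exact absurd hA (by simp)

end Rec
section Main

variable (r : XX → XX → Prop) (hwf : WellFounded r)

/-- The final almost disjoint family. -/
def AFam : Set (Set ℕ) :=
  A0 ∪ {A | ∃ x : XX, (stage r hwf x).1 = some A}

lemma famS_subset_AFam (x : XX) : famS r hwf x ⊆ AFam r hwf := by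
  rintro A (hA | ⟨y, _, hy⟩)
  · exact Or.inl hA
  · exact Or.inr ⟨y, hy⟩

lemma AFam_ad (hseg : ∀ x : XX, {y | r y x}.Countable)
    (htri : ∀ x y : XX, r x y ∨ x = y ∨ r y x) :
    ∀ A ∈ AFam r hwf, ∀ B ∈ AFam r hwf, A ≠ B → (A ∩ B).Finite := by
  have key : ∀ (x : XX) (A : Set ℕ), (stage r hwf x).1 = some A →
      ∀ G ∈ famS r hwf x, (A ∩ G).Finite := by
    intro x A hA
    exact (stage_fst_spec r hwf hseg x A hA).2.2.1
  rintro A (⟨n, rfl⟩ | ⟨x, hx⟩) B hB hne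
  · rcases hB with ⟨m, rfl⟩ | ⟨y, hy⟩
    · have hnm : n ≠ m := fun h => hne (by rw [h])
      rw [BB_disjoint hnm]
      exact finite_empty
    · rw [inter_comm]
      exact key y B hy (BB n) (Or.inl (mem_range_self n))
  · rcases hB with ⟨m, rfl⟩ | ⟨y, hy⟩
    · exact key x A hx (BB m) (Or.inl (mem_range_self m))
    · rcases htri x y with hxy | rfl | hyx
      · rw [inter_comm]
        exact key y B hy A (Or.inr ⟨x, hxy, hx⟩)
      · rw [hx] at hy
        exact absurd (Option.some_injective _ hy) hne
      · exact key x A hx B (Or.inr ⟨y, hyx, hy⟩)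

lemma AFam_infinite (hseg : ∀ x : XX, {y | r y x}.Countable) : ∀ A ∈ AFam r hwf, A.Infinite := by
  rintro A (⟨n, rfl⟩ | ⟨x, hx⟩)
  · exact BB_infinite n
  · exact (stage_fst_spec r hwf hseg x A hx).2.1

/-- Every candidate separating set is killed by some member of the family. -/
lemma AFam_kill (hseg : ∀ x : XX, {y | r y x}.Countable) (D : Set ℕ) :
    ∃ A ∈ AFam r hwf, ((A ∩ EE).Finite ∧ (A \ D).Infinite) ∨
      ((A ∩ EE).Infinite ∧ (A ∩ D).Infinite) := by
  classical
  set x : XX := (D, fun _ => (∅ : Set ℕ)) with hxdef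
  cases hKL : (stage r hwf x).1 with
  | some A =>
    have hspec := stage_fst_spec r hwf hseg x A hKL
    have hsub : A ⊆ EEᶜ \ D := hspec.1
    refine ⟨A, Or.inr ⟨x, hKL⟩, Or.inl ⟨?_, ?_⟩⟩
    · have : A ∩ EE = ∅ := by
        apply eq_empty_iff_forall_notMem.mpr
        rintro a ⟨haA, haE⟩
        exact (hsub haA).1 haE
      rw [this]; exact finite_empty
    · apply hspec.2.1.mono
      intro a ha
      exact ⟨ha, (hsub ha).2⟩
  | none =>
    have hnl := stage_none_spec r hwf hseg x hKL
    simp only [LargeP, not_forall] at hnl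
    obtain ⟨t, ht, hfin⟩ := hnl
    rw [not_infinite] at hfin
    have hpre : {n | BB n ∈ (t : Set (Set ℕ))}.Finite :=
      t.finite_toSet.preimage BB_injective.injOn
    obtain ⟨n, hn⟩ : ∃ n, BB n ∉ (t : Set (Set ℕ)) := by
      by_contra hcon
      push_neg at hcon
      exact (infinite_univ (α := ℕ)) (hpre.subset (fun n _ => hcon n))
    refine ⟨BB n, Or.inl (mem_range_self n), Or.inr ⟨BB_even_infinite n, ?_⟩⟩
    -- the odd part of `BB n` is almost contained in `D`
    have hPfin : ((BB n \ EE) \ D).Finite := by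
      have hsub : (BB n \ EE) \ D ⊆
          ((EEᶜ \ D) \ ⋃₀ ↑t) ∪ ⋃ G ∈ t, ((BB n \ EE) ∩ G) := by
        intro a ha
        by_cases hat : a ∈ ⋃₀ (t : Set (Set ℕ))
        · obtain ⟨G, hG, haG⟩ := hat
          right
          simp only [mem_iUnion, exists_prop]
          exact ⟨G, hG, ha.1, haG⟩
        · exact Or.inl ⟨⟨ha.1.2, ha.2⟩, hat⟩
      apply (Finite.union hfin (t.finite_toSet.biUnion (fun G hG => ?_))).subset hsub
      rcases ht hG with rfl | hGfam
      · simp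
      · rcases hGfam with ⟨m, rfl⟩ | ⟨y, hy, hGy⟩
        · have hnm : n ≠ m := fun h => hn (h ▸ hG)
          apply Finite.subset (finite_empty (α := ℕ))
          rw [← BB_disjoint hnm]
          exact fun a ha => ⟨ha.1.1, ha.2⟩
        · have := (stage_fst_spec r hwf hseg y G hGy).2.2.1 (BB n)
            (Or.inl (mem_range_self n))
          rw [inter_comm] at this
          exact this.subset (fun a ha => ⟨ha.1.1, ha.2⟩)
    have hPinf := BB_odd_infinite n
    have : ((BB n \ EE) ∩ D).Infinite := by
      by_contra hcon
      rw [not_infinite] at hcon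
      apply hPinf
      apply (hcon.union hPfin).subset
      intro a ha
      by_cases haD : a ∈ D
      · exact Or.inl ⟨ha, haD⟩
      · exact Or.inr ⟨ha, haD⟩
    exact this.mono (fun a ha => ⟨ha.1.1, ha.2⟩)

/-- The committed partitioner at a suitable stage is a partitioner of the final family. -/
lemma AFam_partitioner (hseg : ∀ x : XX, {y | r y x}.Countable)
    (htri : ∀ x y : XX, r x y ∨ x = y ∨ r y x) (x : XX)
    (h1 : Set.range x.2 ⊆ famS r hwf x)
    (h2 : ∀ A ∈ famS r hwf x, ∀ B ∈ famS r hwf x, A ≠ B → (A ∩ B).Finite) :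
    (∀ A ∈ AFam r hwf, (A \ (stage r hwf x).2).Finite ∨ (A ∩ (stage r hwf x).2).Finite) ∧
      (∀ B ∈ Set.range x.2, (B \ (stage r hwf x).2).Finite) ∧
      ∀ A ∈ famS r hwf x, A ∉ Set.range x.2 → (A ∩ (stage r hwf x).2).Finite := by
  classical
  have hspec := stage_snd_spec r hwf hseg x h1 h2
  have hfam : ∀ A ∈ famS r hwf x,
      (A \ (stage r hwf x).2).Finite ∨ (A ∩ (stage r hwf x).2).Finite := by
    intro A hA
    by_cases hAB : A ∈ Set.range x.2
    · exact Or.inl (hspec.1 A hAB)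
    · exact Or.inr (hspec.2 A hA hAB)
  refine ⟨?_, hspec.1, hspec.2⟩
  rintro A (hA0 | ⟨y, hy⟩)
  · exact hfam A (Or.inl hA0)
  · rcases htri y x with hyx | rfl | hxy
    · exact hfam A (Or.inr ⟨y, hyx, hy⟩)
    · exact (stage_fst_spec r hwf hseg y A hy).2.2.2 _ (mem_insert _ _)
    · exact (stage_fst_spec r hwf hseg y A hy).2.2.2 _
        (mem_insert_of_mem _ ⟨x, hxy, rfl⟩)

/-- Finding a stage handling a given countable task, above a given countable family. -/
lemma exists_good_stage (hseg : ∀ x : XX, {y | r y x}.Countable)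
    (htri : ∀ x y : XX, r x y ∨ x = y ∨ r y x) (f : ℕ → Set ℕ) (S : Set (Set ℕ)) (hS : S.Countable)
    (hSA : S ⊆ AFam r hwf) :
    ∃ x : XX, x.2 = f ∧ S ⊆ famS r hwf x := by
  classical
  have hGdef : ∀ A ∈ S, A ∉ A0 → ∃ y : XX, (stage r hwf y).1 = some A := by
    intro A hA hA0
    rcases hSA hA with h | h
    · exact absurd h hA0
    · exact h
  set g : Set ℕ → XX := fun A =>
    if h : ∃ y : XX, (stage r hwf y).1 = some A then Classical.choose h
    else ((∅ : Set ℕ), fun _ => (∅ : Set ℕ)) with hgdef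
  set Bad : Set XX := ⋃ A ∈ S, {x | ¬ r (g A) x} with hBaddef
  have hBadc : Bad.Countable := by
    apply Countable.biUnion hS
    intro A _
    apply Countable.mono (s₂ := insert (g A) {x | r x (g A)}) ?_ ((hseg (g A)).insert _)
    intro x hx
    rcases htri x (g A) with h | h | h
    · exact mem_insert_of_mem _ h
    · exact h ▸ mem_insert _ _
    · exact absurd h hx
  have hY : ¬ ({x : XX | x.2 = f}).Countable := by
    intro hY
    have hinj : Function.Injective (fun D : Set ℕ => ((D, f) : XX)) := by
      intro a b hab
      exact congrArg Prod.fst hab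
    have : (univ : Set (Set ℕ)).Countable := by
      have := (hY.preimage hinj (f := fun D : Set ℕ => ((D, f) : XX)))
      apply this.mono
      intro D _
      exact rfl
    rw [countable_univ_iff] at this
    have hle : Cardinal.mk (Set ℕ) ≤ Cardinal.aleph0 := Cardinal.mk_le_aleph0
    rw [Cardinal.mk_set, Cardinal.mk_nat] at hle
    exact absurd (Cardinal.cantor Cardinal.aleph0) (not_lt.mpr hle)
  obtain ⟨x, hxY, hxB⟩ : ∃ x, x ∈ {x : XX | x.2 = f} ∧ x ∉ Bad := by
    by_contra hcon
    push_neg at hcon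
    exact hY (hBadc.mono hcon)
  refine ⟨x, hxY, ?_⟩
  intro A hA
  by_cases hA0 : A ∈ A0
  · exact Or.inl hA0
  · have hex := hGdef A hA hA0
    have hst : (stage r hwf (g A)).1 = some A := by
      rw [hgdef]
      simp only [dif_pos hex]
      exact Classical.choose_spec hex
    have hr : r (g A) x := by
      by_contra hr
      exact hxB (mem_biUnion hA hr)
    exact Or.inr ⟨g A, hr, hst⟩

end Main
universe uCH in
theorem statement11' (hCH' : (2 : Cardinal.{uCH}) ^ Cardinal.aleph0 = Cardinal.aleph 1) :
    ∃ 𝒜 : Set (Set ℕ), AlmostDisjointFam 𝒜 ∧ StronglyAleph0Separated 𝒜 ∧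
      ¬ @AlmostNormalSp (ℕ ⊕ ↥𝒜) (psiTop 𝒜) := by
  classical
  have hCH : (2 : Cardinal.{0}) ^ Cardinal.aleph0 = Cardinal.aleph 1 := by
    rw [← Cardinal.lift_inj.{0, uCH}, Cardinal.lift_power, Cardinal.lift_two,
      Cardinal.lift_aleph0, Cardinal.lift_aleph]
    simpa using hCH'
  -- the index type has cardinality ℵ₁
  have hX : Cardinal.mk XX = Cardinal.aleph 1 := by
    have h1 : Cardinal.mk XX =
        Cardinal.mk (Set ℕ) * Cardinal.mk (ℕ → Set ℕ) := by
      rw [Cardinal.mk_prod, Cardinal.lift_id, Cardinal.lift_id]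
    have h2 : Cardinal.mk (ℕ → Set ℕ) = (2 ^ Cardinal.aleph0) ^ Cardinal.aleph0 := by
      rw [Cardinal.mk_arrow, Cardinal.lift_id, Cardinal.lift_id, Cardinal.mk_set,
        Cardinal.mk_nat]
    rw [h1, h2, Cardinal.mk_set, Cardinal.mk_nat, ← Cardinal.power_mul,
      Cardinal.aleph0_mul_aleph0, ← Cardinal.power_add, Cardinal.aleph0_add_aleph0]
    exact hCH
  obtain ⟨r, wo, hord⟩ := Cardinal.ord_eq XX
  haveI : IsWellOrder XX r := wo
  have hwf : WellFounded r := IsWellFounded.wf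
  have htri : ∀ x y : XX, r x y ∨ x = y ∨ r y x := fun x y => trichotomous_of r x y
  have hseg : ∀ x : XX, {y | r y x}.Countable := by
    intro x
    rw [Cardinal.countable_iff_lt_aleph_one, ← hX]
    exact Cardinal.card_typein_lt (r := r) x hord
  refine ⟨AFam r hwf, ⟨AFam_infinite r hwf hseg, AFam_ad r hwf hseg htri⟩, ?_, ?_⟩
  · -- strongly ℵ₀-separated
    intro ℬ 𝒞 hB hC hBc hCc hdisj
    rcases ℬ.eq_empty_or_nonempty with rfl | hBne
    · refine ⟨∅, fun A _ => Or.inr (by simp), by simp, fun C _ => by simp⟩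
    obtain ⟨f, hf⟩ := hBc.exists_eq_range hBne
    obtain ⟨x, hx2, hsub⟩ := exists_good_stage r hwf hseg htri f (ℬ ∪ 𝒞)
      (hBc.union hCc) (union_subset hB hC)
    have hrange : Set.range x.2 = ℬ := by rw [hx2, ← hf]
    have h1 : Set.range x.2 ⊆ famS r hwf x := by
      rw [hrange]
      exact fun B hBB => hsub (Or.inl hBB)
    have h2 : ∀ A ∈ famS r hwf x, ∀ B ∈ famS r hwf x, A ≠ B → (A ∩ B).Finite :=
      fun A hA B hBB hne => AFam_ad r hwf hseg htri A (famS_subset_AFam r hwf x hA)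
        B (famS_subset_AFam r hwf x hBB) hne
    obtain ⟨hpart, hBin, hCfin⟩ := AFam_partitioner r hwf hseg htri x h1 h2
    refine ⟨(stage r hwf x).2, ?_, ?_, ?_⟩
    · intro A hA
      exact hpart A hA
    · intro B hBB
      exact hBin B (hrange ▸ hBB)
    · intro C hCC
      refine hCfin C (hsub (Or.inr hCC)) ?_
      rw [hrange]
      exact fun hCB => (Set.disjoint_left.mp hdisj hCB) hCC
  · -- not almost normal
    intro han
    set 𝒜 := AFam r hwf with h𝒜
    letI : TopologicalSpace (ℕ ⊕ ↥𝒜) := psiTop 𝒜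
    have hopen : ∀ U : Set (ℕ ⊕ ↥𝒜), IsOpen U ↔
        (∀ A : ↥𝒜, Sum.inr A ∈ U → (((A : Set ℕ)) \ {n | Sum.inl n ∈ U}).Finite) :=
      fun U => Iff.rfl
    set C : Set (ℕ ⊕ ↥𝒜) :=
      {p | ∃ A : ↥𝒜, p = Sum.inr A ∧ ((A : Set ℕ) ∩ EE).Finite} with hCdef
    set K : Set (ℕ ⊕ ↥𝒜) :=
      {p | (∃ n ∈ EE, p = Sum.inl n) ∨
        ∃ A : ↥𝒜, p = Sum.inr A ∧ ((A : Set ℕ) ∩ EE).Infinite} with hKdef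
    have hinlK : ∀ n : ℕ, Sum.inl (β := ↥𝒜) n ∈ K ↔ n ∈ EE := by
      intro n
      constructor
      · rintro (⟨m, hm, heq⟩ | ⟨A, heq, _⟩)
        · rw [Sum.inl.injEq] at heq
          exact heq ▸ hm
        · exact absurd heq (by simp)
      · intro hn
        exact Or.inl ⟨n, hn, rfl⟩
    have hCclosed : IsClosed C := by
      rw [← isOpen_compl_iff, hopen]
      intro A _
      have : {n : ℕ | Sum.inl (β := ↥𝒜) n ∈ Cᶜ} = univ := by
        ext n
        simp only [mem_univ, iff_true, mem_compl_iff, hCdef, mem_setOf_eq]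
        rintro ⟨A', heq, _⟩
        exact absurd heq (by simp)
      rw [this]
      simp
    have hKclosed : IsClosed K := by
      rw [← isOpen_compl_iff, hopen]
      intro A hA
      have hfin : ((A : Set ℕ) ∩ EE).Finite := by
        rw [Set.not_infinite.symm]
        intro hinf
        exact hA (Or.inr ⟨A, rfl, hinf⟩)
      have : {n : ℕ | Sum.inl (β := ↥𝒜) n ∈ Kᶜ} = EEᶜ := by
        ext n
        simp only [mem_compl_iff, mem_setOf_eq, hinlK]
      rw [this]
      apply hfin.subset
      intro a ha
      simp only [mem_diff, mem_compl_iff, not_not] at ha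
      exact ⟨ha.1, ha.2⟩
    have hdisjCK : Disjoint C K := by
      rw [Set.disjoint_left]
      rintro p ⟨A, rfl, hfin⟩ (⟨n, _, heq⟩ | ⟨A', heq, hinf⟩)
      · exact absurd heq (by simp)
      · rw [Sum.inr.injEq] at heq
        exact (heq ▸ hinf) hfin
    have hreg : IsRegClosed K := by
      set O : Set (ℕ ⊕ ↥𝒜) := {p | ∃ n ∈ EE, p = Sum.inl n} with hOdef
      have hOopen : IsOpen O := by
        rw [hopen]
        rintro A ⟨n, _, heq⟩
        exact absurd heq (by simp)
      have hOK : O ⊆ K := fun p hp => Or.inl hp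
      have hOint : O ⊆ interior K := interior_maximal hOK hOopen
      have hKclO : K ⊆ closure O := by
        rintro p (⟨n, hn, rfl⟩ | ⟨A, rfl, hinf⟩)
        · exact subset_closure ⟨n, hn, rfl⟩
        · rw [mem_closure_iff]
          intro U hU hAU
          have hfinU := (hopen U).mp hU A hAU
          obtain ⟨a, ha⟩ := (hinf.diff hfinU).nonempty
          refine ⟨Sum.inl a, ?_, ⟨a, ha.1.2, rfl⟩⟩
          by_contra haU
          exact ha.2 ⟨ha.1.1, haU⟩
      apply subset_antisymm
      · exact closure_minimal interior_subset hKclosed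
      · exact hKclO.trans (closure_mono hOint)
    obtain ⟨U, V, hUo, hVo, hCU, hKV, hUV⟩ := han C K hCclosed hKclosed hreg hdisjCK
    set D : Set ℕ := {n | Sum.inl (β := ↥𝒜) n ∈ U} with hDdef
    obtain ⟨A, hAmem, hAkill⟩ := AFam_kill r hwf hseg D
    rcases hAkill with ⟨hfinE, hinfD⟩ | ⟨hinfE, hinfD⟩
    · have hinC : Sum.inr (⟨A, hAmem⟩ : ↥𝒜) ∈ C := ⟨⟨A, hAmem⟩, rfl, hfinE⟩
      have := (hopen U).mp hUo ⟨A, hAmem⟩ (hCU hinC)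
      exact hinfD this
    · have hinK : Sum.inr (⟨A, hAmem⟩ : ↥𝒜) ∈ K := Or.inr ⟨⟨A, hAmem⟩, rfl, hinfE⟩
      have hfinV := (hopen V).mp hVo ⟨A, hAmem⟩ (hKV hinK)
      apply hinfD
      apply hfinV.subset
      rintro a ⟨haA, haD⟩
      exact ⟨haA, fun haV => (Set.disjoint_left.mp hUV haD) haV⟩

/-- Under CH there is a strongly ℵ₀-separated AD family whose Ψ-space is
not almost-normal. -/
theorem statement11 (hCH : (2 : Cardinal) ^ Cardinal.aleph0 = Cardinal.aleph 1) :
    ∃ 𝒜 : Set (Set ℕ), AlmostDisjointFam 𝒜 ∧ StronglyAleph0Separated 𝒜 ∧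
      ¬ @AlmostNormalSp (ℕ ⊕ ↥𝒜) (psiTop 𝒜) := statement11' hCH
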